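/- Let d ≥ 0 and i ≥ 1 be integers, and let h ∈ ℚ[t]. If there exist nonnegative rational numbers g_0, …, g_{⌊(d+1)/2⌋} with h(t) = ∑_{j=0}^{⌊(d+1)/2⌋} g_j · t^j · P_{d−2j,i}(t), then there exist nonnegative rational numbers g'_0, …, g'_{⌊(d+1)/2⌋} with h(t) = ∑_{j=0}^{⌊(d+1)/2⌋} g'_j · t^j · P_{d−2j,i+1}(t). -/

import Mathlib

open Polynomial Finset

/-- The polynomial `P_{d,i}(t)`, here with rational coefficients: `P_{d,i} = 1` for `d < 0`
(in particular `P_{-1,i} = 1`), and for `d ≥ 0`,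
`P_{d,i} = (1 + t + ⋯ + t^i)^q (1 + t + ⋯ + t^r)` where `q ≥ 0` and `1 ≤ r ≤ i` are the
unique integers with `d + 1 = q·i + r` (for `i ≥ 1`, `q = ⌊d/i⌋` and `r = (d mod i) + 1`). -/
noncomputable def Ppoly (d : ℤ) (i : ℕ) : ℚ[X] :=
  if d < 0 then 1
  else (∑ k ∈ range (i + 1), X ^ k) ^ (d.toNat / i) *
    (∑ k ∈ range (d.toNat % i + 2), X ^ k)

noncomputable def geo (n : ℕ) : ℚ[X] := ∑ k ∈ range n, X ^ k

lemma geo_one : geo 1 = 1 := by simp [geo]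

lemma geo_identity (a b c : ℕ) :
    geo (c + a) * geo (c + b) = geo c * geo (c + a + b) + X ^ c * (geo a * geo b) := by
  have hX : ((X : ℚ[X]) - 1) ≠ 0 := by
    simpa using Polynomial.X_sub_C_ne_zero (1 : ℚ)
  have h2 : ((X : ℚ[X]) - 1) ^ 2 ≠ 0 := pow_ne_zero _ hX
  apply mul_right_cancel₀ h2
  have key : ∀ n : ℕ, geo n * ((X : ℚ[X]) - 1) = X ^ n - 1 := fun n => geom_sum_mul X n
  calc geo (c + a) * geo (c + b) * ((X:ℚ[X]) - 1) ^ 2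
      = (geo (c+a) * (X - 1)) * (geo (c+b) * (X - 1)) := by ring
    _ = (X ^ (c+a) - 1) * (X ^ (c+b) - 1) := by rw [key, key]
    _ = (X^c - 1) * (X^(c+a+b) - 1) + X^c * ((X^a - 1) * (X^b - 1)) := by
        simp only [pow_add]; ring
    _ = (geo c * (X-1)) * (geo (c+a+b) * (X-1)) + X^c * ((geo a * (X-1)) * (geo b * (X-1))) := by
        rw [key, key, key, key]
    _ = (geo c * geo (c + a + b) + X ^ c * (geo a * geo b)) * ((X:ℚ[X]) - 1) ^ 2 := by ring

lemma Ppoly_eq (d : ℤ) (hd : 0 ≤ d) (i : ℕ) :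
    Ppoly d i = geo (i + 1) ^ (d.toNat / i) * geo (d.toNat % i + 2) := by
  rw [Ppoly, if_neg (by omega)]; rfl

lemma Ppoly_neg (d : ℤ) (hd : d < 0) (i : ℕ) : Ppoly d i = 1 := by
  rw [Ppoly, if_pos hd]

lemma geo_pow_mul_geo (m : ℕ) (hm : 1 ≤ m) (q s : ℕ) (hs1 : 1 ≤ s) (hs2 : s ≤ m + 1) :
    geo (m + 1) ^ q * geo s = Ppoly ((q * m + s : ℤ) - 2) m := by
  rcases Nat.lt_or_ge s 2 with h2 | h2
  · -- s = 1
    have hs : s = 1 := by omega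
    subst hs
    rcases Nat.eq_zero_or_pos q with hq | hq
    · subst hq
      rw [Ppoly_neg _ (by norm_num), geo_one]; ring
    · obtain ⟨q', rfl⟩ : ∃ q', q = q' + 1 := ⟨q - 1, by omega⟩
      have hT : ((((q':ℤ) + 1) * m + 1) - 2).toNat = m * q' + (m - 1) := by
        have h0 : ((((q':ℤ) + 1) * m + 1) - 2) = ((m * q' + (m - 1) : ℕ) : ℤ) := by
          have h1 : ((m - 1 : ℕ) : ℤ) = (m : ℤ) - 1 := by omega
          push_cast [h1]; ring
        rw [h0, Int.toNat_natCast]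
      have hnn : (0:ℤ) ≤ (((q':ℤ) + 1) * m + 1) - 2 := by
        have : (0:ℤ) ≤ (q' : ℤ) * m := by positivity
        nlinarith
      push_cast
      rw [Ppoly_eq _ hnn, hT]
      have hdiv : (m * q' + (m - 1)) / m = q' := by
        rw [Nat.mul_add_div (by omega), Nat.div_eq_of_lt (by omega), Nat.add_zero]
      have hmod : (m * q' + (m - 1)) % m = m - 1 := by
        rw [Nat.mul_add_mod, Nat.mod_eq_of_lt (by omega)]
      rw [hdiv, hmod]
      have h3 : m - 1 + 2 = m + 1 := by omega
      rw [h3, geo_one, pow_succ]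
      ring
  · -- 2 ≤ s
    have hT : ((q * m + s : ℤ) - 2).toNat = m * q + (s - 2) := by
      have h0 : ((q * m + s : ℤ) - 2) = ((m * q + (s - 2) : ℕ) : ℤ) := by
        have h1 : ((s - 2 : ℕ) : ℤ) = (s : ℤ) - 2 := by omega
        push_cast [h1]; ring
      rw [h0, Int.toNat_natCast]
    have hnn : (0:ℤ) ≤ (q * m + s : ℤ) - 2 := by
      have : (0:ℤ) ≤ (q : ℤ) * m := by positivity
      omega
    rw [Ppoly_eq _ hnn, hT]
    have hdiv : (m * q + (s - 2)) / m = q := by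
      rw [Nat.mul_add_div (by omega), Nat.div_eq_of_lt (by omega), Nat.add_zero]
    have hmod : (m * q + (s - 2)) % m = s - 2 := by
      rw [Nat.mul_add_mod, Nat.mod_eq_of_lt (by omega)]
    rw [hdiv, hmod]
    have h3 : s - 2 + 2 = s := by omega
    rw [h3]

/-- `p` is a nonnegative combination of the basis `(X^j Ppoly (d-2j) m)_{0 ≤ j ≤ (d+1)/2}`. -/
def InCone (m : ℕ) (d : ℤ) (p : ℚ[X]) : Prop :=
  ∃ g : ℕ → ℚ, (∀ j, 0 ≤ g j) ∧
    p = ∑ j ∈ range ((d + 1).toNat / 2 + 1), C (g j) * X ^ j * Ppoly (d - 2 * j) m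

lemma inCone_zero (m : ℕ) (d : ℤ) : InCone m d 0 :=
  ⟨0, fun _ => le_refl 0, by simp⟩

lemma inCone_add {m : ℕ} {d : ℤ} {p q : ℚ[X]} (hp : InCone m d p) (hq : InCone m d q) :
    InCone m d (p + q) := by
  obtain ⟨g, hg, rfl⟩ := hp
  obtain ⟨g', hg', rfl⟩ := hq
  refine ⟨g + g', fun j => add_nonneg (hg j) (hg' j), ?_⟩
  rw [← Finset.sum_add_distrib]
  refine Finset.sum_congr rfl fun j _ => ?_
  simp [C_add]; ring

lemma inCone_smul {m : ℕ} {d : ℤ} {p : ℚ[X]} {c : ℚ} (hc : 0 ≤ c) (hp : InCone m d p) :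
    InCone m d (C c * p) := by
  obtain ⟨g, hg, rfl⟩ := hp
  refine ⟨fun j => c * g j, fun j => mul_nonneg hc (hg j), ?_⟩
  rw [Finset.mul_sum]
  refine Finset.sum_congr rfl fun j _ => ?_
  simp [C_mul]; ring

lemma inCone_sum {m : ℕ} {d : ℤ} {ι : Type*} (t : Finset ι) (f : ι → ℚ[X])
    (hf : ∀ x ∈ t, InCone m d (f x)) : InCone m d (∑ x ∈ t, f x) := by
  classical
  induction t using Finset.induction_on with
  | empty => simpa using inCone_zero m d
  | insert _ _ hx ih =>
    rw [Finset.sum_insert hx]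
    exact inCone_add (hf _ (Finset.mem_insert_self _ _))
      (ih fun x hxt => hf x (Finset.mem_insert_of_mem hxt))

lemma inCone_Ppoly (m : ℕ) (d : ℤ) : InCone m d (Ppoly d m) := by
  refine ⟨fun j => if j = 0 then 1 else 0, fun j => by positivity, ?_⟩
  rw [Finset.sum_eq_single 0]
  · simp
  · intro j _ hj
    simp [hj]
  · intro habs
    simp at habs

lemma inCone_shift {m : ℕ} {d : ℤ} {p : ℚ[X]} (hd : -1 ≤ d) (hp : InCone m d p) :
    InCone m (d + 2) (X * p) := by
  obtain ⟨g, hg, rfl⟩ := hp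
  refine ⟨fun j => if j = 0 then 0 else g (j - 1), ?_, ?_⟩
  · intro j; dsimp only; split
    · norm_num
    · exact hg _
  have hN : (d + 2 + 1).toNat / 2 + 1 = ((d + 1).toNat / 2 + 1) + 1 := by omega
  rw [hN]
  conv_rhs => rw [Finset.sum_range_succ']
  simp only [Nat.add_sub_cancel, if_neg (Nat.succ_ne_zero _), ite_true, if_pos rfl,
    eq_self_iff_true, map_zero, zero_mul, add_zero]
  rw [Finset.mul_sum]
  apply Finset.sum_congr rfl
  intro j hj
  have harg : d + 2 - 2 * (((j : ℕ) + 1 : ℕ) : ℤ) = d - 2 * (j : ℤ) := by push_cast; ring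
  rw [harg, pow_succ]
  ring

lemma inCone_shift_pow {m : ℕ} {d : ℤ} {p : ℚ[X]} (hd : -1 ≤ d) (c : ℕ) (hp : InCone m d p) :
    InCone m (d + 2 * c) (X ^ c * p) := by
  induction c with
  | zero => simpa using hp
  | succ n ih =>
    have := inCone_shift (by omega) ih
    have harg : d + 2 * (n + 1 : ℕ) = d + 2 * (n : ℕ) + 2 := by push_cast; ring
    rw [harg]
    convert this using 1
    rw [pow_succ]; ring

lemma inCone_congr {m : ℕ} {D D' : ℤ} {p p' : ℚ[X]} (hD : D = D') (hp : p = p')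
    (h : InCone m D p) : InCone m D' p' := by
  subst hD; subst hp; exact h

lemma key (m : ℕ) (hm : 1 ≤ m) :
    ∀ n s q r : ℕ, 1 ≤ s → s ≤ m + 1 → 1 ≤ r → r ≤ m + 1 → s + r ≤ n →
      InCone m ((q * m + s + r : ℤ) - 3) (geo s * (geo (m + 1) ^ q * geo r)) := by
  intro n
  induction n with
  | zero => intro s q r hs1 _ hr1 _ hn; omega
  | succ n ih =>
    intro s q r hs1 hs2 hr1 hr2 hn
    by_cases hs : s = 1
    · subst hs
      have h := inCone_Ppoly m (((q : ℤ) * m + r) - 2)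
      rw [← geo_pow_mul_geo m hm q r hr1 hr2] at h
      exact inCone_congr (by push_cast; ring) (by rw [geo_one, one_mul]) h
    by_cases hr : r = 1
    · subst hr
      have h := inCone_Ppoly m (((q : ℤ) * m + s) - 2)
      rw [← geo_pow_mul_geo m hm q s hs1 hs2] at h
      exact inCone_congr (by push_cast; ring) (by rw [geo_one]; ring) h
    by_cases hrm : r = m + 1
    · subst hrm
      have h := inCone_Ppoly m ((((q + 1 : ℕ)) * m + s : ℤ) - 2)
      rw [← geo_pow_mul_geo m hm (q + 1) s hs1 hs2] at h
      exact inCone_congr (by push_cast; ring) (by rw [pow_succ]; ring) h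
    by_cases hsm : s = m + 1
    · subst hsm
      have h := inCone_Ppoly m ((((q + 1 : ℕ)) * m + r : ℤ) - 2)
      rw [← geo_pow_mul_geo m hm (q + 1) r hr1 hr2] at h
      exact inCone_congr (by push_cast; ring) (by rw [pow_succ]; ring) h
    -- now 2 ≤ s ≤ m, 2 ≤ r ≤ m
    have hs2' : s ≤ m := by omega
    have hr2' : r ≤ m := by omega
    have hs1' : 2 ≤ s := by omega
    have hr1' : 2 ≤ r := by omega
    by_cases hsum : s + r ≤ m + 2
    · -- small case: c = 1
      have key2 : geo s * geo r = geo (s + r - 1) + X * (geo (s - 1) * geo (r - 1)) := by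
        have hid := geo_identity (s - 1) (r - 1) 1
        rw [show 1 + (s - 1) + (r - 1) = s + r - 1 by omega, show 1 + (s - 1) = s by omega,
          show 1 + (r - 1) = r by omega, geo_one, pow_one, one_mul] at hid
        exact hid
      have hprod : geo s * (geo (m + 1) ^ q * geo r)
          = geo (m + 1) ^ q * geo (s + r - 1)
            + X * (geo (s - 1) * (geo (m + 1) ^ q * geo (r - 1))) := by
        calc geo s * (geo (m + 1) ^ q * geo r) = (geo s * geo r) * geo (m + 1) ^ q := by ring
          _ = (geo (s + r - 1) + X * (geo (s - 1) * geo (r - 1))) * geo (m + 1) ^ q := by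
              rw [key2]
          _ = _ := by ring
      rw [hprod]
      apply inCone_add
      · have h := inCone_Ppoly m (((q * m + (s + r - 1) : ℕ) : ℤ) - 2)
        rw [show (((q * m + (s + r - 1) : ℕ) : ℤ) - 2) = ((q : ℤ) * m + ((s + r - 1 : ℕ) : ℤ)) - 2
          by push_cast; ring, ← geo_pow_mul_geo m hm q (s + r - 1) (by omega) (by omega)] at h
        exact inCone_congr
          (by push_cast [Nat.cast_sub (show 1 ≤ s + r by omega)]; ring) rfl h
      · have h := ih (s - 1) q (r - 1) (by omega) (by omega) (by omega) (by omega) (by omega)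
        have hqm : (0 : ℤ) ≤ (q : ℤ) * m := by positivity
        have h2 := inCone_shift (by
          push_cast [Nat.cast_sub (show 1 ≤ s by omega), Nat.cast_sub (show 1 ≤ r by omega)]
          linarith) h
        refine inCone_congr ?_ rfl h2
        push_cast [Nat.cast_sub (show 1 ≤ s by omega), Nat.cast_sub (show 1 ≤ r by omega)]
        ring
    · -- big case: c = s + r - (m+1)
      set c := s + r - (m + 1) with hc
      have hc2 : 2 ≤ c := by omega
      have hcs : c ≤ s - 1 := by omega
      have hcr : c ≤ r - 1 := by omega
      have hcz : ((c : ℕ) : ℤ) = (s : ℤ) + r - (m + 1) := by omega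
      have key2 : geo s * geo r = geo c * geo (m + 1) + X ^ c * (geo (s - c) * geo (r - c)) := by
        have hid := geo_identity (s - c) (r - c) c
        rw [show c + (s - c) + (r - c) = m + 1 by omega, show c + (s - c) = s by omega,
          show c + (r - c) = r by omega] at hid
        exact hid
      have hprod : geo s * (geo (m + 1) ^ q * geo r)
          = geo (m + 1) ^ (q + 1) * geo c
            + X ^ c * (geo (s - c) * (geo (m + 1) ^ q * geo (r - c))) := by
        calc geo s * (geo (m + 1) ^ q * geo r) = (geo s * geo r) * geo (m + 1) ^ q := by ring
          _ = (geo c * geo (m + 1) + X ^ c * (geo (s - c) * geo (r - c))) * geo (m + 1) ^ q := by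
              rw [key2]
          _ = _ := by rw [pow_succ]; ring
      rw [hprod]
      apply inCone_add
      · have h := inCone_Ppoly m ((((q + 1 : ℕ)) * m + c : ℤ) - 2)
        rw [← geo_pow_mul_geo m hm (q + 1) c (by omega) (by omega)] at h
        exact inCone_congr (by push_cast [hcz]; ring) rfl h
      · have h := ih (s - c) q (r - c) (by omega) (by omega) (by omega) (by omega) (by omega)
        have hqm : (0 : ℤ) ≤ (q : ℤ) * m := by positivity
        have h2 := inCone_shift_pow (by
          push_cast [Nat.cast_sub (show c ≤ s by omega), Nat.cast_sub (show c ≤ r by omega), hcz]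
          linarith) c h
        refine inCone_congr ?_ rfl h2
        push_cast [Nat.cast_sub (show c ≤ s by omega), Nat.cast_sub (show c ≤ r by omega), hcz]
        ring

lemma inCone_mul_geo {m : ℕ} (hm : 1 ≤ m) {s : ℕ} (hs1 : 1 ≤ s) (hs2 : s ≤ m + 1)
    {e : ℤ} (he : -1 ≤ e) : InCone m (e + s - 1) (geo s * Ppoly e m) := by
  rcases eq_or_lt_of_le he with he1 | he0
  · -- e = -1
    have h := key m hm (s + 1) s 0 1 hs1 hs2 le_rfl (by omega) le_rfl
    refine inCone_congr ?_ ?_ h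
    · push_cast; omega
    · rw [← he1, Ppoly_neg _ (by norm_num), geo_one, pow_zero, one_mul]
  · -- e ≥ 0
    have he0' : (0 : ℤ) ≤ e := by omega
    set q := e.toNat / m with hq
    set r := e.toNat % m + 2 with hr
    have hrm : e.toNat % m < m := Nat.mod_lt _ (by omega)
    have hqm : (q * m + e.toNat % m : ℕ) = e.toNat := by
      rw [hq, mul_comm]; exact Nat.div_add_mod _ _
    have hq2 : (q : ℤ) * m + ((e.toNat % m : ℕ) : ℤ) = e := by
      have := congrArg (fun x : ℕ => (x : ℤ)) hqm
      push_cast at this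
      omega
    have h := key m hm (s + r) s q r hs1 hs2 (by omega) (by omega) le_rfl
    refine inCone_congr ?_ ?_ h
    · rw [hr]; push_cast [Int.toNat_of_nonneg he0'] at hq2 ⊢; linarith
    · rw [Ppoly_eq e he0']

lemma inCone_step {m : ℕ} (hm : 1 ≤ m) {s : ℕ} (hs1 : 1 ≤ s) (hs2 : s ≤ m + 1) {d : ℤ}
    (hd : -1 ≤ d) {p : ℚ[X]} (hp : InCone m d p) : InCone m (d + s - 1) (geo s * p) := by
  obtain ⟨g, hg, rfl⟩ := hp
  rw [Finset.mul_sum]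
  apply inCone_sum
  intro j hj
  have hj' : 2 * (j : ℤ) ≤ d + 1 := by
    simp only [Finset.mem_range] at hj
    omega
  have h1 : InCone m (d - 2 * j + s - 1) (geo s * Ppoly (d - 2 * j) m) :=
    inCone_mul_geo hm hs1 hs2 (by omega)
  have h2 := inCone_shift_pow (by omega) j h1
  have h3 := inCone_smul (hg j) h2
  exact inCone_congr (by push_cast; ring) (by ring) h3

lemma inCone_Ppoly_lower (i : ℕ) (hi : 1 ≤ i) (e : ℤ) (he : -1 ≤ e) :
    InCone (i + 1) e (Ppoly e i) := by
  have hone : InCone (i + 1) (-1) 1 := by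
    have := inCone_Ppoly (i + 1) (-1)
    rwa [Ppoly_neg _ (by norm_num)] at this
  have hpow : ∀ q : ℕ, InCone (i + 1) ((q : ℤ) * i - 1) (geo (i + 1) ^ q) := by
    intro q
    induction q with
    | zero => exact inCone_congr (by push_cast; ring) (by rw [pow_zero]) hone
    | succ n ihq =>
      have hni : (0 : ℤ) ≤ (n : ℤ) * i := by positivity
      have h := inCone_step (m := i + 1) (by omega) (s := i + 1) (by omega) (by omega)
        (by omega) ihq
      exact inCone_congr (by push_cast; ring) (by rw [pow_succ]; ring) h
  rcases eq_or_lt_of_le he with he1 | he0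
  · rw [← he1, Ppoly_neg _ (by norm_num)]
    exact hone
  · have he0' : (0 : ℤ) ≤ e := by omega
    set q := e.toNat / i with hq
    set r := e.toNat % i + 2 with hr
    have hrm : e.toNat % i < i := Nat.mod_lt _ (by omega)
    have hqm : (q * i + e.toNat % i : ℕ) = e.toNat := by
      rw [hq, mul_comm]; exact Nat.div_add_mod _ _
    have hq2 : (q : ℤ) * i + ((e.toNat % i : ℕ) : ℤ) = e := by
      have := congrArg (fun x : ℕ => (x : ℤ)) hqm
      push_cast at this
      omega
    have hqi : (0 : ℤ) ≤ (q : ℤ) * i := by positivity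
    have h := inCone_step (m := i + 1) (by omega) (s := r) (by omega) (by omega)
      (by omega) (hpow q)
    refine inCone_congr ?_ ?_ h
    · rw [hr]; push_cast [Int.toNat_of_nonneg he0'] at hq2 ⊢; linarith
    · rw [Ppoly_eq e he0']; ring

/-- if `h ∈ ℚ[t]` is a nonnegative rational combination of the basis
`B_{d,i} = (t^j P_{d-2j,i})_{0 ≤ j ≤ ⌊(d+1)/2⌋}`, then it is also a nonnegative rational
combination of the basis `B_{d,i+1}`: i.e. `g^{(d,i)}(h) ≥ 0` implies `g^{(d,i+1)}(h) ≥ 0`. -/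
theorem g_vector_hierarchy (d i : ℕ) (hi : 1 ≤ i) (h : ℚ[X])
    (hg : ∃ g : ℕ → ℚ, (∀ j, 0 ≤ g j) ∧
      h = ∑ j ∈ range ((d + 1) / 2 + 1),
        C (g j) * X ^ j * Ppoly ((d : ℤ) - 2 * j) i) :
    ∃ g' : ℕ → ℚ, (∀ j, 0 ≤ g' j) ∧
      h = ∑ j ∈ range ((d + 1) / 2 + 1),
        C (g' j) * X ^ j * Ppoly ((d : ℤ) - 2 * j) (i + 1) := by
  obtain ⟨g, hg0, rfl⟩ := hg
  have htn : (((d : ℤ) + 1)).toNat = d + 1 := by omega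
  have hcone : InCone (i + 1) (d : ℤ)
      (∑ j ∈ range ((d + 1) / 2 + 1), C (g j) * X ^ j * Ppoly ((d : ℤ) - 2 * j) i) := by
    apply inCone_sum
    intro j hj
    have hj' : 2 * (j : ℤ) ≤ (d : ℤ) + 1 := by
      simp only [Finset.mem_range] at hj
      omega
    have h1 := inCone_Ppoly_lower i hi ((d : ℤ) - 2 * j) (by omega)
    have h2 := inCone_shift_pow (by omega) j h1
    have h3 := inCone_smul (hg0 j) h2
    exact inCone_congr (by push_cast; ring) (by ring) h3
  obtain ⟨g', hg', hEq⟩ := hcone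
  rw [htn] at hEq
  exact ⟨g', hg', hEq⟩
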